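/- arXiv:1807.11406 — 7 statements merged into one kernel-verified Lean document; each statement's English description precedes it below -/
import Mathlib

section
/- Let H1 be a real separable Hilbert space, H2 a real Hilbert space of real-valued functions on a Borel set X, and A : H1 → H2 a bounded linear operator such that there exists c > 0 with |(Af)(x)| ≤ c‖f‖_{H1} for all x ∈ X and all f ∈ H1. Let φ_x ∈ H1 be the Riesz representer of f ↦ (Af)(x). Then the range Im(A), equipped with ‖g‖_{H_K} := min{‖w‖_{H1} : w ∈ H1 and g(x) = ⟨w, φ_x⟩_{H1} for all x ∈ X} (this minimum is attained), is a Hilbert space of functions on X in which every evaluation functional g ↦ g(x) is continuous; it is a reproducing kernel Hilbert space with kernel K(x,r) := ⟨φ_x, φ_r⟩_{H1}, i.e. K_x := K(x,·) = Aφ_x belongs to Im(A) and g(x) = ⟨g, K_x⟩_{H_K} for every g ∈ Im(A) and x ∈ X. -/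
open RealInnerProductSpace

/-- **The range of `A` is a reproducing kernel Hilbert space.**
Let `H1` be a real separable Hilbert space, `H2` a real Hilbert space of real-valued functions
on a Borel set `X` (encoded by an injective linear evaluation map `e : H2 →ₗ[ℝ] X → ℝ`),
and `A : H1 → H2` bounded linear with `|(Af)(x)| ≤ c‖f‖` for all `x, f`.  Let `φ x` be the Riesz
representer of `f ↦ (Af)(x)`.  Then `Im(A)`, equipped with the norm
`‖g‖_{H_K} = min {‖w‖ : (∀ x, g(x) = ⟪w, φ x⟫)}` (the minimum being attained), is a Hilbert
space of functions on `X` with continuous evaluation functionals, and it is a RKHS with kernel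
`K(x,r) = ⟪φ x, φ r⟫`: `K_x = A (φ x) ∈ Im(A)` and `g(x) = ⟪g, K_x⟫_{H_K}` for all `g ∈ Im(A)`
(the `H_K`-inner product being computed through the minimal-norm representers; completeness of
`H_K` is expressed by the fact that `w ↦ A w` is an isometry from the Hilbert space `Ker(A)ᗮ`
onto `Im(A)` for the `H_K`-norm). -/
theorem stmt0
    {H1 H2 X : Type*}
    [NormedAddCommGroup H1] [InnerProductSpace ℝ H1] [CompleteSpace H1]
    [TopologicalSpace.SeparableSpace H1]
    [NormedAddCommGroup H2] [InnerProductSpace ℝ H2] [CompleteSpace H2]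
    [MeasurableSpace X]
    (e : H2 →ₗ[ℝ] X → ℝ) (he : Function.Injective e)
    (A : H1 →L[ℝ] H2) (c : ℝ) (hc : 0 < c)
    (hbound : ∀ (x : X) (f : H1), |e (A f) x| ≤ c * ‖f‖)
    (φ : X → H1) (hφ : ∀ (x : X) (f : H1), e (A f) x = ⟪f, φ x⟫) :
    -- the minimum defining the `H_K`-norm is attained: every `g ∈ Im(A)` has a
    -- minimal-norm representer
    (∀ g ∈ Set.range A, ∃ w : H1,
        (∀ x, e g x = ⟪w, φ x⟫) ∧
        (∀ w' : H1, (∀ x, e g x = ⟪w', φ x⟫) → ‖w‖ ≤ ‖w'‖)) ∧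
    -- the kernel sections `K_x = A (φ x)` belong to `Im(A)` and `K(x,r) = ⟪φ x, φ r⟫`
    (∀ x : X, A (φ x) ∈ Set.range A ∧ ∀ r : X, e (A (φ x)) r = ⟪φ x, φ r⟫) ∧
    -- reproducing property: `g(x) = ⟪g, K_x⟫_{H_K}`, the `H_K`-inner product being the
    -- `H1`-inner product of the minimal-norm representers
    (∀ g ∈ Set.range A, ∀ (x : X) (w wx : H1),
        ((∀ x', e g x' = ⟪w, φ x'⟫) ∧
          ∀ w' : H1, (∀ x', e g x' = ⟪w', φ x'⟫) → ‖w‖ ≤ ‖w'‖) →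
        ((∀ x', e (A (φ x)) x' = ⟪wx, φ x'⟫) ∧
          ∀ w' : H1, (∀ x', e (A (φ x)) x' = ⟪w', φ x'⟫) → ‖wx‖ ≤ ‖w'‖) →
        e g x = ⟪w, wx⟫) ∧
    -- every evaluation functional is continuous with respect to the `H_K`-norm
    (∀ x : X, ∃ C : ℝ, 0 ≤ C ∧ ∀ g ∈ Set.range A, ∀ w : H1,
        ((∀ x', e g x' = ⟪w, φ x'⟫) ∧
          ∀ w' : H1, (∀ x', e g x' = ⟪w', φ x'⟫) → ‖w‖ ≤ ‖w'‖) →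
        |e g x| ≤ C * ‖w‖) ∧
    -- `w ↦ A w` maps `Ker(A)ᗮ` isometrically onto `Im(A)` with the `H_K`-norm, so that
    -- `(Im(A), ‖·‖_{H_K})` inherits the complete Hilbert space structure of `Ker(A)ᗮ`
    (∀ w ∈ (LinearMap.ker (A : H1 →ₗ[ℝ] H2))ᗮ,
        (∀ x, e (A w) x = ⟪w, φ x⟫) ∧
        ∀ w' : H1, (∀ x, e (A w) x = ⟪w', φ x⟫) → ‖w‖ ≤ ‖w'‖) := by
  haveI : CompleteSpace (LinearMap.ker (A : H1 →ₗ[ℝ] H2)) := (ContinuousLinearMap.isClosed_ker A).completeSpace_coe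
  set K := LinearMap.ker (A : H1 →ₗ[ℝ] H2) with hK
  -- being a representer means being a preimage
  have hrep : ∀ (g : H2) (w : H1), (∀ x, e g x = ⟪w, φ x⟫) ↔ g = A w := by
    intro g w
    constructor
    · intro h
      apply he
      funext x
      rw [h x, hφ]
    · intro h
      subst h
      exact fun x => hφ x w
  -- minimality of representers in Kᗮ
  have hmin : ∀ w ∈ Kᗮ, ∀ w' : H1, A w' = A w → ‖w‖ ≤ ‖w'‖ := by
    intro w hw w' hw'
    have hk : w' - w ∈ K := by
      simp [hK, LinearMap.mem_ker, map_sub, hw']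
    have : ‖w'‖ ^ 2 = ‖w‖ ^ 2 + ‖w' - w‖ ^ 2 := by
      have h0 : ⟪w, w' - w⟫ = 0 := by rw [real_inner_comm]; exact hw _ hk
      have := norm_add_sq_real w (w' - w)
      simpa [h0] using this
    nlinarith [norm_nonneg w, norm_nonneg w', norm_nonneg (w' - w), sq_nonneg ‖w' - w‖]
  -- for each f, the projection onto Kᗮ is a minimal representer of A f
  have hproj : ∀ f : H1, ∃ w ∈ Kᗮ, A w = A f := by
    intro f
    refine ⟨f - K.orthogonalProjectionOnto f, Submodule.sub_starProjection_mem_orthogonal f, ?_⟩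
    have h0 : A ((K.orthogonalProjectionOnto f : H1)) = 0 :=
      LinearMap.mem_ker.mp (K.orthogonalProjectionOnto f).2
    rw [map_sub, h0, sub_zero]
  -- a minimal representer lies in Kᗮ
  have hmem : ∀ (w : H1), (∀ w' : H1, A w' = A w → ‖w‖ ≤ ‖w'‖) → w ∈ Kᗮ := by
    intro w hmin'
    obtain ⟨w₀, hw₀, hAw₀⟩ := hproj w
    have h1 : ‖w‖ ≤ ‖w₀‖ := hmin' w₀ hAw₀
    have h2 : w - w₀ ∈ K := by simp [hK, LinearMap.mem_ker, map_sub, hAw₀]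
    have h0 : ⟪w₀, w - w₀⟫ = 0 := by rw [real_inner_comm]; exact hw₀ _ h2
    have hsq : ‖w‖ ^ 2 = ‖w₀‖ ^ 2 + ‖w - w₀‖ ^ 2 := by
      have := norm_add_sq_real w₀ (w - w₀)
      simpa [h0] using this
    have : ‖w - w₀‖ = 0 := by nlinarith [norm_nonneg w₀, norm_nonneg w, norm_nonneg (w - w₀)]
    have : w = w₀ := by
      have := norm_eq_zero.mp this
      linear_combination (norm := abel) this
    rw [this]; exact hw₀
  refine ⟨?_, ?_, ?_, ?_, ?_⟩
  · rintro g ⟨f, rfl⟩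
    obtain ⟨w, hw, hAw⟩ := hproj f
    refine ⟨w, ?_, ?_⟩
    · rw [hrep, hAw]
    · intro w' hw'
      rw [hrep] at hw'
      exact hmin w hw w' (hw'.symm.trans hAw.symm)
  · intro x
    exact ⟨⟨φ x, rfl⟩, fun r => hφ r (φ x)⟩
  · rintro g hg x w wx ⟨hw, hwmin⟩ ⟨hwx, hwxmin⟩
    have hwperp : w ∈ Kᗮ := by
      apply hmem
      intro w' hw'
      exact hwmin w' (by rw [hrep]; rw [(hrep g w).mp hw, hw'])
    have hAwx : A (φ x) = A wx := (hrep _ _).mp hwx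
    have hk : φ x - wx ∈ K := by simp [hK, LinearMap.mem_ker, map_sub, hAwx]
    have h0 : ⟪w, φ x - wx⟫ = 0 := by rw [real_inner_comm]; exact hwperp _ hk
    rw [hw x]
    rw [inner_sub_right] at h0
    linarith
  · intro x
    refine ⟨‖φ x‖, norm_nonneg _, ?_⟩
    rintro g hg w ⟨hw, -⟩
    rw [hw x]
    calc |⟪w, φ x⟫| ≤ ‖w‖ * ‖φ x‖ := abs_real_inner_le_norm w (φ x)
      _ = ‖φ x‖ * ‖w‖ := mul_comm _ _
  · intro w hw
    refine ⟨fun x => hφ x w, ?_⟩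
    intro w' hw'
    rw [hrep] at hw'
    exact hmin w hw w' hw'.symm
end

section
/- Let ψ : [0,∞) → [0,∞) be continuous, convex and strictly increasing, and let λ > 0. Let ĝ_{R_y,λ} be the unique minimizer over H_K = Im(A) of g ↦ R_y(g) + λψ(‖g‖_{H_K}), and let f̂_{R_y,λ} be the unique minimizer over H1 of f ↦ R_y(Af) + λψ(‖f‖_{H1}). Then f̂_{R_y,λ} = Ã^{-1} ĝ_{R_y,λ}; equivalently, A f̂_{R_y,λ} = ĝ_{R_y,λ} and f̂_{R_y,λ} ∈ Ker(A)^⊥. -/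
open RealInnerProductSpace

/-- The `H_K`-norm of `g ∈ Im(A)`: the minimal `H1`-norm of a preimage of `g` under `A`. -/
noncomputable def KNorm {H1 H2 : Type*}
    [NormedAddCommGroup H1] [InnerProductSpace ℝ H1]
    [NormedAddCommGroup H2] [InnerProductSpace ℝ H2]
    (A : H1 →L[ℝ] H2) (g : H2) : ℝ :=
  sInf {r : ℝ | ∃ w : H1, A w = g ∧ ‖w‖ = r}

/-- **Correspondence between Tikhonov regularized solutions.**
Let `ψ : [0,∞) → [0,∞)` be continuous, convex and strictly increasing and `λ > 0`.  If
`ĝ_{R_y,λ}` is the unique minimizer over `H_K = Im(A)` of `g ↦ R_y(g) + λ ψ(‖g‖_{H_K})` and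
`f̂_{R_y,λ}` is the unique minimizer over `H1` of `f ↦ R_y(A f) + λ ψ(‖f‖_{H1})`, then
`f̂_{R_y,λ} = Ã⁻¹ ĝ_{R_y,λ}`, i.e. `A f̂_{R_y,λ} = ĝ_{R_y,λ}` and `f̂_{R_y,λ} ∈ Ker(A)ᗮ`. -/
theorem stmt2
    {H1 H2 : Type*}
    [NormedAddCommGroup H1] [InnerProductSpace ℝ H1] [CompleteSpace H1]
    [TopologicalSpace.SeparableSpace H1]
    [NormedAddCommGroup H2] [InnerProductSpace ℝ H2] [CompleteSpace H2]
    (A : H1 →L[ℝ] H2)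
    (R : H2 → ℝ) (y : H2)
    (hRnonneg : ∀ g, 0 ≤ R g)
    (hRzero : ∀ g, R g = 0 ↔ g = y)
    (hcond :
      (LowerSemicontinuous R ∧ StrictConvexOn ℝ Set.univ R ∧
        (∀ M : ℝ, ∃ r : ℝ, ∀ g : H2, r ≤ ‖g‖ → M ≤ R g) ∧
        IsClosed (Set.range A)) ∨
      (LowerSemicontinuous (fun f : H1 => R (A f)) ∧
        StrictConvexOn ℝ Set.univ (fun f : H1 => R (A f)) ∧
        (∀ M : ℝ, ∃ r : ℝ, ∀ f : H1, r ≤ ‖f‖ → M ≤ R (A f))))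
    -- the penalty function ψ : [0,∞) → [0,∞), continuous, convex, strictly increasing
    (ψ : ℝ → ℝ)
    (hψcont : ContinuousOn ψ (Set.Ici 0))
    (hψconv : ConvexOn ℝ (Set.Ici 0) ψ)
    (hψmono : StrictMonoOn ψ (Set.Ici 0))
    (hψnonneg : ∀ t ∈ Set.Ici (0 : ℝ), 0 ≤ ψ t)
    (lam : ℝ) (hlam : 0 < lam)
    -- `ghat` is the unique minimizer of `g ↦ R_y(g) + λ ψ(‖g‖_{H_K})` over `H_K = Im(A)`
    (ghat : H2) (hghat_mem : ghat ∈ Set.range A)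
    (hghat_min : ∀ g ∈ Set.range A,
      R ghat + lam * ψ (KNorm A ghat) ≤ R g + lam * ψ (KNorm A g))
    (hghat_uniq : ∀ g ∈ Set.range A,
      (∀ g' ∈ Set.range A, R g + lam * ψ (KNorm A g) ≤ R g' + lam * ψ (KNorm A g')) →
      g = ghat)
    -- `fhat` is the unique minimizer of `f ↦ R_y(A f) + λ ψ(‖f‖_{H1})` over `H1`
    (fhat : H1)
    (hfhat_min : ∀ f : H1, R (A fhat) + lam * ψ ‖fhat‖ ≤ R (A f) + lam * ψ ‖f‖)
    (hfhat_uniq : ∀ f : H1,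
      (∀ f' : H1, R (A f) + lam * ψ ‖f‖ ≤ R (A f') + lam * ψ ‖f'‖) → f = fhat) :
    A fhat = ghat ∧ fhat ∈ (LinearMap.ker (A : H1 →ₗ[ℝ] H2))ᗮ := by
  classical
  have hbdd : ∀ g : H2, BddBelow {r : ℝ | ∃ w : H1, A w = g ∧ ‖w‖ = r} := by
    intro g
    exact ⟨0, by rintro r ⟨u, -, rfl⟩; exact norm_nonneg u⟩
  have hle : ∀ f : H1, KNorm A (A f) ≤ ‖f‖ := fun f =>
    csInf_le (hbdd _) ⟨f, rfl, rfl⟩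
  -- minimal-norm preimage
  have key : ∀ g ∈ Set.range A, ∃ w : H1, A w = g ∧ w ∈ (LinearMap.ker (A : H1 →ₗ[ℝ] H2))ᗮ ∧
      KNorm A g = ‖w‖ := by
    rintro g ⟨f, rfl⟩
    obtain ⟨k, hk, w, hw, hfw⟩ := (LinearMap.ker (A : H1 →ₗ[ℝ] H2)).exists_add_mem_mem_orthogonal f
    have hk0 : A k = 0 := hk
    have hAw : A w = A f := by rw [hfw]; simp [hk0]
    have hlb : ∀ r ∈ {r : ℝ | ∃ u : H1, A u = A f ∧ ‖u‖ = r}, ‖w‖ ≤ r := by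
      rintro r ⟨u, hu, rfl⟩
      have hmem : u - w ∈ LinearMap.ker (A : H1 →ₗ[ℝ] H2) := by
        simp [LinearMap.mem_ker, hu, hAw]
      have hinner : ⟪u - w, w⟫ = 0 :=
        ((Submodule.mem_orthogonal _ w).mp hw) _ hmem
      have hsq : ‖u‖ ^ 2 = ‖u - w‖ ^ 2 + ‖w‖ ^ 2 := by
        have := norm_add_sq_real (u - w) w
        rw [hinner] at this
        simpa using this
      nlinarith [norm_nonneg u, norm_nonneg w, norm_nonneg (u - w)]
    refine ⟨w, hAw, hw, le_antisymm (csInf_le (hbdd _) ⟨w, hAw, rfl⟩)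
      (le_csInf ⟨‖w‖, w, hAw, rfl⟩ hlb)⟩
  have hψmonoOn := hψmono.monotoneOn
  have hKnonneg : ∀ g ∈ Set.range A, (0:ℝ) ≤ KNorm A g := by
    intro g hg
    obtain ⟨w, -, -, hKn⟩ := key g hg
    rw [hKn]; exact norm_nonneg w
  have hψf : ψ (KNorm A (A fhat)) ≤ ψ ‖fhat‖ :=
    hψmonoOn (hKnonneg _ ⟨fhat, rfl⟩) (norm_nonneg fhat) (hle fhat)
  have hstep1 : A fhat = ghat := by
    refine hghat_uniq (A fhat) ⟨fhat, rfl⟩ ?_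
    intro g' hg'
    obtain ⟨w, hAw, -, hKn⟩ := key g' hg'
    calc R (A fhat) + lam * ψ (KNorm A (A fhat))
        ≤ R (A fhat) + lam * ψ ‖fhat‖ := by
          have := mul_le_mul_of_nonneg_left hψf hlam.le
          linarith
      _ ≤ R (A w) + lam * ψ ‖w‖ := hfhat_min w
      _ = R g' + lam * ψ (KNorm A g') := by rw [hAw, hKn]
  obtain ⟨w, hAw, hwmem, hKn⟩ := key (A fhat) ⟨fhat, rfl⟩
  have hwle : ‖w‖ ≤ ‖fhat‖ := by rw [← hKn]; exact hle fhat
  have hψw : ψ ‖w‖ ≤ ψ ‖fhat‖ :=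
    hψmonoOn (norm_nonneg w) (norm_nonneg fhat) hwle
  have hwf : w = fhat := by
    refine hfhat_uniq w ?_
    intro f'
    calc R (A w) + lam * ψ ‖w‖
        ≤ R (A fhat) + lam * ψ ‖fhat‖ := by
          rw [hAw]
          have := mul_le_mul_of_nonneg_left hψw hlam.le
          linarith
      _ ≤ R (A f') + lam * ψ ‖f'‖ := hfhat_min f'
  exact ⟨hstep1, hwf ▸ hwmem⟩
end

section
/- Let Z_n = {(x_1,y_1),…,(x_n,y_n)} be a finite set of samples with x_i ∈ X, y_i ∈ ℝ, and define the empirical functional R_{Z_n}(g) = (1/n) Σ_{i=1}^n V(y_i, g(x_i)), where V : Y × ℝ → [0,∞) is such that V(y_i, ·) is lower semicontinuous, strictly convex and coercive for each i. Let ĝ^{(n)}_R be the minimizer of R_{Z_n} over H_K, let (f̂^{(n)}_R)† be the minimum-norm minimizer of f ↦ R_{Z_n}(Af) over H1, and for λ > 0 let ĝ^{(n)}_{R,λ} and f̂^{(n)}_{R,λ} be the minimizers of the corresponding functionals penalized by λψ(‖·‖_{H_K}) and λψ(‖·‖_{H1}) respectively, where ψ : [0,∞) → [0,∞) is continuous,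 convex and strictly increasing. Then (f̂^{(n)}_R)† = Ã^{-1} ĝ^{(n)}_R and f̂^{(n)}_{R,λ} = Ã^{-1} ĝ^{(n)}_{R,λ}. -/
open RealInnerProductSpace

lemma aux_norm_le {H1 H2 : Type*}
    [NormedAddCommGroup H1] [InnerProductSpace ℝ H1]
    [NormedAddCommGroup H2] [InnerProductSpace ℝ H2]
    (A : H1 →L[ℝ] H2) (z : H1) (hz : z ∈ (LinearMap.ker (A : H1 →ₗ[ℝ] H2))ᗮ)
    (w : H1) (hw : A w = A z) : ‖z‖ ≤ ‖w‖ := by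
  have hk : w - z ∈ LinearMap.ker (A : H1 →ₗ[ℝ] H2) := by
    simp [LinearMap.mem_ker, map_sub, hw]
  have h0 : ⟪w - z, z⟫ = 0 := hz _ hk
  have hpy : ‖w‖ ^ 2 = ‖z‖ ^ 2 + ‖w - z‖ ^ 2 := by
    have h := norm_add_sq_real z (w - z)
    have h0' : ⟪z, w - z⟫ = 0 := by rw [real_inner_comm]; exact h0
    simp [h0'] at h
    simpa using h
  nlinarith [norm_nonneg w, norm_nonneg z, sq_nonneg ‖w - z‖]

lemma aux_eq {H1 H2 : Type*}
    [NormedAddCommGroup H1] [InnerProductSpace ℝ H1]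
    [NormedAddCommGroup H2] [InnerProductSpace ℝ H2]
    (A : H1 →L[ℝ] H2) (z : H1) (hz : z ∈ (LinearMap.ker (A : H1 →ₗ[ℝ] H2))ᗮ)
    (w : H1) (hw : A w = A z) (hn : ‖w‖ ≤ ‖z‖) : w = z := by
  have hk : w - z ∈ LinearMap.ker (A : H1 →ₗ[ℝ] H2) := by
    simp [LinearMap.mem_ker, map_sub, hw]
  have h0 : ⟪w - z, z⟫ = 0 := hz _ hk
  have hpy : ‖w‖ ^ 2 = ‖z‖ ^ 2 + ‖w - z‖ ^ 2 := by
    have h := norm_add_sq_real z (w - z)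
    have h0' : ⟪z, w - z⟫ = 0 := by rw [real_inner_comm]; exact h0
    simp [h0'] at h
    simpa using h
  have : ‖w - z‖ = 0 := by nlinarith [norm_nonneg w, norm_nonneg z, norm_nonneg (w - z)]
  exact sub_eq_zero.mp (norm_eq_zero.mp this)

lemma aux_knorm {H1 H2 : Type*}
    [NormedAddCommGroup H1] [InnerProductSpace ℝ H1]
    [NormedAddCommGroup H2] [InnerProductSpace ℝ H2]
    (A : H1 →L[ℝ] H2) (z : H1) (hz : z ∈ (LinearMap.ker (A : H1 →ₗ[ℝ] H2))ᗮ) :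
    KNorm A (A z) = ‖z‖ := by
  apply le_antisymm
  · exact csInf_le ⟨‖z‖, fun r ⟨w, hw, hwr⟩ => hwr ▸ aux_norm_le A z hz w hw⟩ ⟨z, rfl, rfl⟩
  · exact le_csInf ⟨‖z‖, z, rfl, rfl⟩ fun r ⟨w, hw, hwr⟩ => hwr ▸ aux_norm_le A z hz w hw

lemma aux_decomp {H1 H2 : Type*}
    [NormedAddCommGroup H1] [InnerProductSpace ℝ H1] [CompleteSpace H1]
    [NormedAddCommGroup H2] [InnerProductSpace ℝ H2]
    (A : H1 →L[ℝ] H2) (f : H1) :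
    ∃ z ∈ (LinearMap.ker (A : H1 →ₗ[ℝ] H2))ᗮ, A z = A f ∧ ‖z‖ ≤ ‖f‖ := by
  haveI : CompleteSpace (LinearMap.ker (A : H1 →ₗ[ℝ] H2)) :=
    (ContinuousLinearMap.isClosed_ker A).completeSpace_coe
  obtain ⟨y, hy, z, hz, hfyz⟩ := (LinearMap.ker (A : H1 →ₗ[ℝ] H2)).exists_add_mem_mem_orthogonal f
  have hAz : A f = A z := by rw [hfyz]; simp [show A y = 0 from LinearMap.mem_ker.mp hy]
  exact ⟨z, hz, hAz.symm, aux_norm_le A z hz f hAz⟩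

/-- **Correspondence between empirical solutions of the discretized problems.**
Given samples `(x_i, y_i)`, `i = 1,…,n`, and the empirical functional
`R_{Z_n}(g) = (1/n) Σ_i V(y_i, g(x_i))` (with `V(y_i,·)` lsc, strictly convex, coercive), for
the minimizer `ĝ⁽ⁿ⁾_R` of `R_{Z_n}` over `H_K = Im(A)`, the minimum-norm minimizer
`(f̂⁽ⁿ⁾_R)†` of `f ↦ R_{Z_n}(Af)` over `H1`, and their Tikhonov-regularized versions
`ĝ⁽ⁿ⁾_{R,λ}`, `f̂⁽ⁿ⁾_{R,λ}` (penalties `λψ(‖·‖_{H_K})`, `λψ(‖·‖_{H1})`), one has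
`(f̂⁽ⁿ⁾_R)† = Ã⁻¹ ĝ⁽ⁿ⁾_R` and `f̂⁽ⁿ⁾_{R,λ} = Ã⁻¹ ĝ⁽ⁿ⁾_{R,λ}`. -/
theorem stmt3
    {H1 H2 X : Type*}
    [NormedAddCommGroup H1] [InnerProductSpace ℝ H1] [CompleteSpace H1]
    [TopologicalSpace.SeparableSpace H1]
    [NormedAddCommGroup H2] [InnerProductSpace ℝ H2] [CompleteSpace H2]
    -- `H2` is a space of functions on `X`, with evaluation `e`
    (e : H2 →ₗ[ℝ] X → ℝ) (he : Function.Injective e)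
    (A : H1 →L[ℝ] H2) (c : ℝ) (hc : 0 < c)
    (hbound : ∀ (x : X) (f : H1), |e (A f) x| ≤ c * ‖f‖)
    (φ : X → H1) (hφ : ∀ (x : X) (f : H1), e (A f) x = ⟪f, φ x⟫)
    -- the samples
    (n : ℕ) (hn : 0 < n) (x : Fin n → X) (yv : Fin n → ℝ)
    -- the loss function
    (V : ℝ → ℝ → ℝ) (hVnonneg : ∀ a t, 0 ≤ V a t)
    (hVlsc : ∀ i : Fin n, LowerSemicontinuous (V (yv i)))
    (hVconv : ∀ i : Fin n, StrictConvexOn ℝ Set.univ (V (yv i)))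
    (hVcoer : ∀ i : Fin n, ∀ M : ℝ, ∃ r : ℝ, ∀ t : ℝ, r ≤ |t| → M ≤ V (yv i) t)
    -- the penalty
    (ψ : ℝ → ℝ)
    (hψcont : ContinuousOn ψ (Set.Ici 0))
    (hψconv : ConvexOn ℝ (Set.Ici 0) ψ)
    (hψmono : StrictMonoOn ψ (Set.Ici 0))
    (hψnonneg : ∀ t ∈ Set.Ici (0 : ℝ), 0 ≤ ψ t)
    (lam : ℝ) (hlam : 0 < lam)
    -- `ghat` minimizes the empirical risk over `H_K = Im(A)` (unique minimizer)
    (ghat : H2) (hghat_mem : ghat ∈ Set.range A)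
    (hghat_min : ∀ g ∈ Set.range A,
      (n : ℝ)⁻¹ * ∑ i, V (yv i) (e ghat (x i)) ≤ (n : ℝ)⁻¹ * ∑ i, V (yv i) (e g (x i)))
    (hghat_uniq : ∀ g ∈ Set.range A,
      (∀ g' ∈ Set.range A,
        (n : ℝ)⁻¹ * ∑ i, V (yv i) (e g (x i)) ≤ (n : ℝ)⁻¹ * ∑ i, V (yv i) (e g' (x i))) →
      g = ghat)
    -- `fdag` is the minimum-norm minimizer of the empirical risk composed with `A`
    (fdag : H1)
    (hfdag_min : ∀ f : H1,
      (n : ℝ)⁻¹ * ∑ i, V (yv i) (e (A fdag) (x i)) ≤ (n : ℝ)⁻¹ * ∑ i, V (yv i) (e (A f) (x i)))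
    (hfdag_norm : ∀ f : H1,
      (∀ f' : H1,
        (n : ℝ)⁻¹ * ∑ i, V (yv i) (e (A f) (x i))
          ≤ (n : ℝ)⁻¹ * ∑ i, V (yv i) (e (A f') (x i))) →
      ‖fdag‖ ≤ ‖f‖)
    -- `ghatl` is the unique minimizer of the penalized empirical risk over `H_K = Im(A)`
    (ghatl : H2) (hghatl_mem : ghatl ∈ Set.range A)
    (hghatl_min : ∀ g ∈ Set.range A,
      (n : ℝ)⁻¹ * ∑ i, V (yv i) (e ghatl (x i)) + lam * ψ (KNorm A ghatl)
        ≤ (n : ℝ)⁻¹ * ∑ i, V (yv i) (e g (x i)) + lam * ψ (KNorm A g))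
    (hghatl_uniq : ∀ g ∈ Set.range A,
      (∀ g' ∈ Set.range A,
        (n : ℝ)⁻¹ * ∑ i, V (yv i) (e g (x i)) + lam * ψ (KNorm A g)
          ≤ (n : ℝ)⁻¹ * ∑ i, V (yv i) (e g' (x i)) + lam * ψ (KNorm A g')) →
      g = ghatl)
    -- `fhatl` is the unique minimizer of the penalized empirical risk over `H1`
    (fhatl : H1)
    (hfhatl_min : ∀ f : H1,
      (n : ℝ)⁻¹ * ∑ i, V (yv i) (e (A fhatl) (x i)) + lam * ψ ‖fhatl‖
        ≤ (n : ℝ)⁻¹ * ∑ i, V (yv i) (e (A f) (x i)) + lam * ψ ‖f‖)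
    (hfhatl_uniq : ∀ f : H1,
      (∀ f' : H1,
        (n : ℝ)⁻¹ * ∑ i, V (yv i) (e (A f) (x i)) + lam * ψ ‖f‖
          ≤ (n : ℝ)⁻¹ * ∑ i, V (yv i) (e (A f') (x i)) + lam * ψ ‖f'‖) →
      f = fhatl) :
    (A fdag = ghat ∧ fdag ∈ (LinearMap.ker (A : H1 →ₗ[ℝ] H2))ᗮ) ∧
    (A fhatl = ghatl ∧ fhatl ∈ (LinearMap.ker (A : H1 →ₗ[ℝ] H2))ᗮ) := by
  -- Part 1
  have h1 : A fdag = ghat :=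
    hghat_uniq (A fdag) ⟨fdag, rfl⟩ (fun g' ⟨f', hf'⟩ => hf' ▸ hfdag_min f')
  have h1' : fdag ∈ (LinearMap.ker (A : H1 →ₗ[ℝ] H2))ᗮ := by
    obtain ⟨z, hz, hAz, hnz⟩ := aux_decomp A fdag
    have hmin : ∀ f' : H1,
        (n : ℝ)⁻¹ * ∑ i, V (yv i) (e (A z) (x i))
          ≤ (n : ℝ)⁻¹ * ∑ i, V (yv i) (e (A f') (x i)) := by
      intro f'; rw [hAz]; exact hfdag_min f'
    have := aux_eq A z hz fdag hAz.symm (hfdag_norm z hmin)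
    rw [this]; exact hz
  refine ⟨⟨h1, h1'⟩, ?_⟩
  -- Part 2
  have h2' : fhatl ∈ (LinearMap.ker (A : H1 →ₗ[ℝ] H2))ᗮ := by
    obtain ⟨z, hz, hAz, hnz⟩ := aux_decomp A fhatl
    have hψle : ψ ‖z‖ ≤ ψ ‖fhatl‖ :=
      hψmono.monotoneOn (norm_nonneg z) (norm_nonneg fhatl) hnz
    have hzmin : ∀ f' : H1,
        (n : ℝ)⁻¹ * ∑ i, V (yv i) (e (A z) (x i)) + lam * ψ ‖z‖
          ≤ (n : ℝ)⁻¹ * ∑ i, V (yv i) (e (A f') (x i)) + lam * ψ ‖f'‖ := by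
      intro f'
      calc (n : ℝ)⁻¹ * ∑ i, V (yv i) (e (A z) (x i)) + lam * ψ ‖z‖
          ≤ (n : ℝ)⁻¹ * ∑ i, V (yv i) (e (A fhatl) (x i)) + lam * ψ ‖fhatl‖ := by
            rw [hAz]
            have := mul_le_mul_of_nonneg_left hψle hlam.le
            linarith
        _ ≤ _ := hfhatl_min f'
    have := hfhatl_uniq z hzmin
    rw [← this]; exact hz
  have hK : KNorm A (A fhatl) = ‖fhatl‖ := aux_knorm A fhatl h2'
  have h2 : A fhatl = ghatl := by
    apply hghatl_uniq (A fhatl) ⟨fhatl, rfl⟩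
    rintro g' ⟨f', rfl⟩
    obtain ⟨z', hz', hAz', hnz'⟩ := aux_decomp A f'
    have hK' : KNorm A (A f') = ‖z'‖ := by rw [← hAz']; exact aux_knorm A z' hz'
    rw [hK, hK']
    have := hfhatl_min z'
    rw [hAz'] at this
    exact this
  exact ⟨h2, h2'⟩
end

section
/- (Representer theorem for the inverse problem.) Let ψ : [0,∞) → [0,∞) be continuous, convex and strictly increasing, λ > 0, and let f̂^{(n)}_{R,λ} be the minimizer over H1 of f ↦ (1/n) Σ_{i=1}^n V(y_i, (Af)(x_i)) + λψ(‖f‖_{H1}), where V(y_i, ·) is lower semicontinuous, strictly convex and coercive. Then f̂^{(n)}_{R,λ} ∈ span{φ_{x_1},…,φ_{x_n}}; i.e. f̂^{(n)}_{R,λ} = Σ_{i=1}^n β_i φ_{x_i} for some real coefficients β_i, and these are the same coefficients for which the corresponding regularized minimizer over H_K satisfies ĝ^{(n)}_{R,λ} = Σ_{i=1}^n β_i K_{x_i}. -/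
open RealInnerProductSpace

section aux
variable {H1 H2 : Type*}
    [NormedAddCommGroup H1] [InnerProductSpace ℝ H1] [CompleteSpace H1]
    [NormedAddCommGroup H2] [InnerProductSpace ℝ H2]
    (A : H1 →L[ℝ] H2)

omit [CompleteSpace H1] in
lemma KNorm_bdd (g : H2) : BddBelow {r : ℝ | ∃ w : H1, A w = g ∧ ‖w‖ = r} :=
  ⟨0, fun r ⟨w, _, hw⟩ => hw ▸ norm_nonneg w⟩

lemma KNorm_le (f : H1) : KNorm A (A f) ≤ ‖f‖ :=
  csInf_le (KNorm_bdd A _) ⟨f, rfl, rfl⟩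

omit [CompleteSpace H1] in
lemma KNorm_nonneg (f : H1) : 0 ≤ KNorm A (A f) :=
  le_csInf ⟨‖f‖, f, rfl, rfl⟩ (fun r ⟨w, _, hw⟩ => hw ▸ norm_nonneg w)

/-- The minimal norm preimage exists. -/
lemma KNorm_attained (f0 : H1) :
    ∃ v : H1, A v = A f0 ∧ KNorm A (A f0) = ‖v‖ := by
  set s : Set H1 := {w : H1 | A w = A f0} with hs
  have hne : s.Nonempty := ⟨f0, rfl⟩
  have hclosed : IsClosed s := isClosed_singleton.preimage A.continuous
  have hconv : Convex ℝ s := by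
    intro a ha b hb t u ht hu htu
    simp only [hs, Set.mem_setOf_eq, map_add, map_smul] at *
    rw [ha, hb, ← add_smul, htu, one_smul]
  obtain ⟨v, hvs, hv⟩ := exists_norm_eq_iInf_of_complete_convex hne
    (hclosed.isComplete) hconv 0
  refine ⟨v, hvs, le_antisymm (csInf_le (KNorm_bdd A _) ⟨v, hvs, rfl⟩)
    (le_csInf ⟨‖f0‖, ⟨f0, rfl, rfl⟩⟩ ?_)⟩
  rintro r ⟨w, hw, rfl⟩
  have : ‖v‖ = ⨅ w : s, ‖(0:H1) - w‖ := by simpa using hv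
  rw [this]
  have := ciInf_le (f := fun w : s => ‖(0:H1) - w‖)
    ⟨0, Set.forall_mem_range.2 fun _ => norm_nonneg _⟩ ⟨w, hw⟩
  simpa using this
end aux

/-- **Representer theorem for the inverse problem.**
Let `ψ : [0,∞) → [0,∞)` be continuous, convex and strictly increasing, `λ > 0`, and let
`f̂⁽ⁿ⁾_{R,λ}` minimize `f ↦ (1/n) Σ_i V(y_i, (Af)(x_i)) + λψ(‖f‖_{H1})` over `H1`.  Then
`f̂⁽ⁿ⁾_{R,λ} = Σ_i β_i φ_{x_i}` for some real coefficients `β_i`, and the same coefficients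
represent the regularized minimizer over `H_K`: `ĝ⁽ⁿ⁾_{R,λ} = Σ_i β_i K_{x_i}` (with
`K_{x_i} = A φ_{x_i}`). -/

theorem stmt9
    {H1 H2 X : Type*}
    [NormedAddCommGroup H1] [InnerProductSpace ℝ H1] [CompleteSpace H1]
    [TopologicalSpace.SeparableSpace H1]
    [NormedAddCommGroup H2] [InnerProductSpace ℝ H2] [CompleteSpace H2]
    -- `H2` is a space of functions on `X`, with evaluation `e`
    (e : H2 →ₗ[ℝ] X → ℝ) (he : Function.Injective e)
    (A : H1 →L[ℝ] H2) (c : ℝ) (hc : 0 < c)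
    (hbound : ∀ (x : X) (f : H1), |e (A f) x| ≤ c * ‖f‖)
    (φ : X → H1) (hφ : ∀ (x : X) (f : H1), e (A f) x = ⟪f, φ x⟫)
    -- the samples
    (n : ℕ) (hn : 0 < n) (x : Fin n → X) (yv : Fin n → ℝ)
    -- the loss function
    (V : ℝ → ℝ → ℝ) (hVnonneg : ∀ a t, 0 ≤ V a t)
    (hVlsc : ∀ i : Fin n, LowerSemicontinuous (V (yv i)))
    (hVconv : ∀ i : Fin n, StrictConvexOn ℝ Set.univ (V (yv i)))
    (hVcoer : ∀ i : Fin n, ∀ M : ℝ, ∃ r : ℝ, ∀ t : ℝ, r ≤ |t| → M ≤ V (yv i) t)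
    -- the penalty
    (ψ : ℝ → ℝ)
    (hψcont : ContinuousOn ψ (Set.Ici 0))
    (hψconv : ConvexOn ℝ (Set.Ici 0) ψ)
    (hψmono : StrictMonoOn ψ (Set.Ici 0))
    (hψnonneg : ∀ t ∈ Set.Ici (0 : ℝ), 0 ≤ ψ t)
    (lam : ℝ) (hlam : 0 < lam)
    -- `fhat = f̂⁽ⁿ⁾_{R,λ}` is the (unique) minimizer of the regularized empirical risk
    -- over `H1`
    (fhat : H1)
    (hfhat_min : ∀ f : H1,
      (n : ℝ)⁻¹ * ∑ i, V (yv i) (e (A fhat) (x i)) + lam * ψ ‖fhat‖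
        ≤ (n : ℝ)⁻¹ * ∑ i, V (yv i) (e (A f) (x i)) + lam * ψ ‖f‖)
    (hfhat_uniq : ∀ f : H1,
      (∀ f' : H1,
        (n : ℝ)⁻¹ * ∑ i, V (yv i) (e (A f) (x i)) + lam * ψ ‖f‖
          ≤ (n : ℝ)⁻¹ * ∑ i, V (yv i) (e (A f') (x i)) + lam * ψ ‖f'‖) →
      f = fhat)
    -- `ghat = ĝ⁽ⁿ⁾_{R,λ}` is the (unique) minimizer of the regularized empirical risk
    -- over `H_K = Im(A)`
    (ghat : H2) (hghat_mem : ghat ∈ Set.range A)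
    (hghat_min : ∀ g ∈ Set.range A,
      (n : ℝ)⁻¹ * ∑ i, V (yv i) (e ghat (x i)) + lam * ψ (KNorm A ghat)
        ≤ (n : ℝ)⁻¹ * ∑ i, V (yv i) (e g (x i)) + lam * ψ (KNorm A g))
    (hghat_uniq : ∀ g ∈ Set.range A,
      (∀ g' ∈ Set.range A,
        (n : ℝ)⁻¹ * ∑ i, V (yv i) (e g (x i)) + lam * ψ (KNorm A g)
          ≤ (n : ℝ)⁻¹ * ∑ i, V (yv i) (e g' (x i)) + lam * ψ (KNorm A g')) →
      g = ghat) :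
    ∃ β : Fin n → ℝ,
      fhat = ∑ i, β i • φ (x i) ∧ ghat = ∑ i, β i • A (φ (x i)) := by
  classical
  have hψm : MonotoneOn ψ (Set.Ici 0) := hψmono.monotoneOn
  -- Step 1: fhat lies in the span of the φ (x i)
  set S : Submodule ℝ H1 := Submodule.span ℝ (Set.range fun i => φ (x i)) with hS
  haveI : FiniteDimensional ℝ S := FiniteDimensional.span_of_finite ℝ (Set.finite_range _)
  haveI : CompleteSpace S := FiniteDimensional.complete ℝ S
  set p : H1 := (S.orthogonalProjectionOnto fhat : H1) with hp
  have hpmem : p ∈ S := (S.orthogonalProjectionOnto fhat).2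
  have hortho : ∀ i, (⟪p, φ (x i)⟫ : ℝ) = ⟪fhat, φ (x i)⟫ := by
    intro i
    have h1 : fhat - p ∈ Sᗮ := S.sub_starProjection_mem_orthogonal fhat
    have h2 : φ (x i) ∈ S := Submodule.subset_span ⟨i, rfl⟩
    have h3 : (⟪φ (x i), fhat - p⟫ : ℝ) = 0 := (Submodule.mem_orthogonal S _).1 h1 _ h2
    rw [inner_sub_right] at h3
    have e1 := real_inner_comm (φ (x i)) p
    have e2 := real_inner_comm (φ (x i)) fhat
    linarith
  have hloss : ∀ i, e (A p) (x i) = e (A fhat) (x i) := by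
    intro i; rw [hφ, hφ, hortho]
  have hnormle : ‖p‖ ≤ ‖fhat‖ := by
    calc ‖p‖ ≤ ‖S.orthogonalProjectionOnto‖ * ‖fhat‖ := (S.orthogonalProjectionOnto).le_opNorm fhat
    _ ≤ 1 * ‖fhat‖ := by
        exact mul_le_mul_of_nonneg_right (Submodule.orthogonalProjectionOnto_norm_le S) (norm_nonneg _)
    _ = ‖fhat‖ := one_mul _
  have hobj_p : (n : ℝ)⁻¹ * ∑ i, V (yv i) (e (A p) (x i)) + lam * ψ ‖p‖
      ≤ (n : ℝ)⁻¹ * ∑ i, V (yv i) (e (A fhat) (x i)) + lam * ψ ‖fhat‖ := by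
    have h1 : ∑ i, V (yv i) (e (A p) (x i)) = ∑ i, V (yv i) (e (A fhat) (x i)) := by
      exact Finset.sum_congr rfl fun i _ => by rw [hloss i]
    have h2 : ψ ‖p‖ ≤ ψ ‖fhat‖ := hψm (norm_nonneg _) (norm_nonneg _) hnormle
    rw [h1]
    exact add_le_add le_rfl (mul_le_mul_of_nonneg_left h2 hlam.le)
  have hpf : p = fhat := hfhat_uniq p fun f' => le_trans hobj_p (hfhat_min f')
  have hfhatS : fhat ∈ S := hpf ▸ hpmem
  rw [hS, Submodule.mem_span_range_iff_exists_fun] at hfhatS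
  obtain ⟨β, hβ⟩ := hfhatS
  refine ⟨β, hβ.symm, ?_⟩
  -- Step 2: ghat = A fhat
  have hAf : A fhat = ghat := by
    apply hghat_uniq (A fhat) ⟨fhat, rfl⟩
    rintro g ⟨w0, rfl⟩
    obtain ⟨v, hvA, hKv⟩ := KNorm_attained A w0
    have hK1 : ψ (KNorm A (A fhat)) ≤ ψ ‖fhat‖ :=
      hψm (KNorm_nonneg A fhat) (norm_nonneg _) (KNorm_le A fhat)
    calc (n : ℝ)⁻¹ * ∑ i, V (yv i) (e (A fhat) (x i)) + lam * ψ (KNorm A (A fhat))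
        ≤ (n : ℝ)⁻¹ * ∑ i, V (yv i) (e (A fhat) (x i)) + lam * ψ ‖fhat‖ :=
          add_le_add le_rfl (mul_le_mul_of_nonneg_left hK1 hlam.le)
      _ ≤ (n : ℝ)⁻¹ * ∑ i, V (yv i) (e (A v) (x i)) + lam * ψ ‖v‖ := hfhat_min v
      _ = (n : ℝ)⁻¹ * ∑ i, V (yv i) (e (A w0) (x i)) + lam * ψ (KNorm A (A w0)) := by
          rw [hvA, hKv]
  rw [← hAf, ← hβ, map_sum]
  exact Finset.sum_congr rfl fun i _ => by rw [map_smul]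
end

section
/- Let V : 𝒴 × ℝ → [0,∞) be strictly convex and Lipschitz continuous in its second argument and coercive (V(Y, g_k(X)) → ∞ for all X, Y whenever ‖g_k‖_{H_K} → ∞), and let ĝ^{(n)}_R be the (unique) minimizer over the reproducing kernel Hilbert space H_K of the unpenalized empirical risk R_{Z_n}(g) = (1/n) Σ_{i=1}^n V(y_i, g(x_i)). Then ĝ^{(n)}_R admits the finite representation ĝ^{(n)}_R = Σ_{j=1}^n α_j K_{x_j} for some real coefficients α_j; i.e. ĝ^{(n)}_R lies in span{K_{x_1},…,K_{x_n}}. -/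
open RealInnerProductSpace

/-- **Representer theorem for the unpenalized empirical minimizer.**
Let `H_K` be a RKHS on `X` with kernel sections `K_x`, and let `V` be strictly convex,
Lipschitz in its second argument and coercive.  Then the (unique) minimizer `ĝ⁽ⁿ⁾_R` over
`H_K` of the unpenalized empirical risk `R_{Z_n}(g) = (1/n) Σ_i V(y_i, g(x_i))` admits the
finite representation `ĝ⁽ⁿ⁾_R = Σ_j α_j K_{x_j}`. -/
theorem stmt10
    {H X : Type*}
    [NormedAddCommGroup H] [InnerProductSpace ℝ H] [CompleteSpace H]
    -- `H` is a RKHS of functions on `X`: evaluation `e` and kernel sections `Kx`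
    (e : H →ₗ[ℝ] X → ℝ) (Kx : X → H)
    (hrepr : ∀ (g : H) (x : X), e g x = ⟪g, Kx x⟫)
    -- the samples
    (n : ℕ) (hn : 0 < n) (x : Fin n → X) (yv : Fin n → ℝ)
    -- the loss: nonnegative, strictly convex and Lipschitz in its second argument, coercive
    (V : ℝ → ℝ → ℝ) (hVnonneg : ∀ a t, 0 ≤ V a t)
    (hVconv : ∀ a : ℝ, StrictConvexOn ℝ Set.univ (V a))
    (σ : NNReal) (hVlip : ∀ a : ℝ, LipschitzWith σ (V a))
    (hVcoer : ∀ gk : ℕ → H, Filter.Tendsto (fun k => ‖gk k‖) Filter.atTop Filter.atTop →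
      ∀ (Y : ℝ) (X' : X), Filter.Tendsto (fun k => V Y (e (gk k) X')) Filter.atTop
        Filter.atTop)
    -- `ghat = ĝ⁽ⁿ⁾_R` is the (unique) minimizer of the empirical risk over `H_K = H`
    (ghat : H)
    (hghat_min : ∀ g : H,
      (n : ℝ)⁻¹ * ∑ i, V (yv i) (e ghat (x i)) ≤ (n : ℝ)⁻¹ * ∑ i, V (yv i) (e g (x i)))
    (hghat_uniq : ∀ g : H,
      (∀ g' : H,
        (n : ℝ)⁻¹ * ∑ i, V (yv i) (e g (x i)) ≤ (n : ℝ)⁻¹ * ∑ i, V (yv i) (e g' (x i))) →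
      g = ghat) :
    ∃ α : Fin n → ℝ, ghat = ∑ j, α j • Kx (x j) := by
  classical
  set S : Submodule ℝ H := Submodule.span ℝ (Set.range fun j => Kx (x j)) with hS
  haveI : FiniteDimensional ℝ S := FiniteDimensional.span_of_finite ℝ (Set.finite_range _)
  set p : H := (S.orthogonalProjectionOnto ghat : H) with hp
  have hErr : ghat - p ∈ Sᗮ := Submodule.sub_starProjection_mem_orthogonal (K := S) ghat
  have hEval : ∀ i, e p (x i) = e ghat (x i) := by
    intro i
    have hmem : Kx (x i) ∈ S := Submodule.subset_span ⟨i, rfl⟩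
    have h0 := hErr (Kx (x i)) hmem
    rw [hrepr, hrepr]
    have h2 : ⟪ghat - p, Kx (x i)⟫ = 0 := by
      rw [real_inner_comm]; exact h0
    rw [inner_sub_left] at h2
    linarith
  have hpmin : ∀ g' : H,
      (n : ℝ)⁻¹ * ∑ i, V (yv i) (e p (x i)) ≤ (n : ℝ)⁻¹ * ∑ i, V (yv i) (e g' (x i)) := by
    intro g'
    have hsum : ∑ i, V (yv i) (e p (x i)) = ∑ i, V (yv i) (e ghat (x i)) :=
      Finset.sum_congr rfl fun i _ => by rw [hEval]
    rw [hsum]; exact hghat_min g'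
  have hpg : p = ghat := hghat_uniq p hpmin
  have hmem : ghat ∈ S := hpg ▸ (S.orthogonalProjectionOnto ghat).2
  rw [hS, Submodule.mem_span_range_iff_exists_fun (R := ℝ)] at hmem
  obtain ⟨c, hc⟩ := hmem
  exact ⟨c, hc.symm⟩
end

section
/- Under the same hypotheses (V strictly convex, coercive and Lipschitz in the second argument), the minimum-norm minimizer (f̂^{(n)}_R)† over H1 of f ↦ (1/n) Σ_{i=1}^n V(y_i, (Af)(x_i)) admits the representation (f̂^{(n)}_R)† = Σ_{j=1}^n α_j φ_{x_j}, with the same coefficients α_j for which ĝ^{(n)}_R = Σ_{j=1}^n α_j K_{x_j}. -/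
open RealInnerProductSpace

/-- **Representer theorem for the minimum-norm empirical solution of the inverse problem.**
With `V` strictly convex, coercive and Lipschitz in its second argument, the minimum-norm
minimizer `(f̂⁽ⁿ⁾_R)†` over `H1` of `f ↦ (1/n) Σ_i V(y_i, (Af)(x_i))` admits the
representation `(f̂⁽ⁿ⁾_R)† = Σ_j α_j φ_{x_j}`, with the same coefficients `α_j` for which
`ĝ⁽ⁿ⁾_R = Σ_j α_j K_{x_j}` (where `K_{x_j} = A φ_{x_j}`). -/
theorem stmt11
    {H1 H2 X : Type*}
    [NormedAddCommGroup H1] [InnerProductSpace ℝ H1] [CompleteSpace H1]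
    [TopologicalSpace.SeparableSpace H1]
    [NormedAddCommGroup H2] [InnerProductSpace ℝ H2] [CompleteSpace H2]
    -- `H2` is a space of functions on `X`, with evaluation `e`
    (e : H2 →ₗ[ℝ] X → ℝ) (he : Function.Injective e)
    (A : H1 →L[ℝ] H2) (c : ℝ) (hc : 0 < c)
    (hbound : ∀ (x : X) (f : H1), |e (A f) x| ≤ c * ‖f‖)
    (φ : X → H1) (hφ : ∀ (x : X) (f : H1), e (A f) x = ⟪f, φ x⟫)
    -- the samples
    (n : ℕ) (hn : 0 < n) (x : Fin n → X) (yv : Fin n → ℝ)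
    -- the loss: nonnegative, strictly convex and Lipschitz in its second argument, coercive
    (V : ℝ → ℝ → ℝ) (hVnonneg : ∀ a t, 0 ≤ V a t)
    (hVconv : ∀ a : ℝ, StrictConvexOn ℝ Set.univ (V a))
    (σ : NNReal) (hVlip : ∀ a : ℝ, LipschitzWith σ (V a))
    (hVcoer : ∀ gk : ℕ → H2, (∀ k, gk k ∈ Set.range A) →
      Filter.Tendsto (fun k => KNorm A (gk k)) Filter.atTop Filter.atTop →
      ∀ (Y : ℝ) (X' : X), Filter.Tendsto (fun k => V Y (e (gk k) X')) Filter.atTop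
        Filter.atTop)
    -- `ghat = ĝ⁽ⁿ⁾_R` is the (unique) minimizer of the empirical risk over `H_K = Im(A)`
    (ghat : H2) (hghat_mem : ghat ∈ Set.range A)
    (hghat_min : ∀ g ∈ Set.range A,
      (n : ℝ)⁻¹ * ∑ i, V (yv i) (e ghat (x i)) ≤ (n : ℝ)⁻¹ * ∑ i, V (yv i) (e g (x i)))
    (hghat_uniq : ∀ g ∈ Set.range A,
      (∀ g' ∈ Set.range A,
        (n : ℝ)⁻¹ * ∑ i, V (yv i) (e g (x i)) ≤ (n : ℝ)⁻¹ * ∑ i, V (yv i) (e g' (x i))) →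
      g = ghat)
    -- `fdag = (f̂⁽ⁿ⁾_R)†` is the minimum-norm minimizer over `H1`
    (fdag : H1)
    (hfdag_min : ∀ f : H1,
      (n : ℝ)⁻¹ * ∑ i, V (yv i) (e (A fdag) (x i))
        ≤ (n : ℝ)⁻¹ * ∑ i, V (yv i) (e (A f) (x i)))
    (hfdag_norm : ∀ f : H1,
      (∀ f' : H1,
        (n : ℝ)⁻¹ * ∑ i, V (yv i) (e (A f) (x i))
          ≤ (n : ℝ)⁻¹ * ∑ i, V (yv i) (e (A f') (x i))) →
      ‖fdag‖ ≤ ‖f‖) :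
    ∃ α : Fin n → ℝ,
      fdag = ∑ j, α j • φ (x j) ∧ ghat = ∑ j, α j • A (φ (x j)) := by
  classical
  -- `A fdag` is a minimizer over `Im A`, hence equals `ghat` by uniqueness
  have hAf : A fdag = ghat := by
    refine hghat_uniq (A fdag) ⟨fdag, rfl⟩ ?_
    rintro g' ⟨f', rfl⟩
    exact hfdag_min f'
  -- The span of the φ(x j)
  set T : Submodule ℝ H1 := Submodule.span ℝ (Set.range fun j => φ (x j)) with hT
  haveI : FiniteDimensional ℝ T := FiniteDimensional.span_of_finite ℝ (Set.finite_range _)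
  set p : H1 := (T.orthogonalProjectionOnto fdag : H1) with hp
  have hpT : p ∈ T := (T.orthogonalProjectionOnto fdag).2
  have hq : fdag - p ∈ Tᗮ := Submodule.sub_starProjection_mem_orthogonal (K := T) fdag
  have heval : ∀ i, e (A p) (x i) = e (A fdag) (x i) := by
    intro i
    rw [hφ, hφ]
    have hperp : ⟪fdag - p, φ (x i)⟫ = 0 := real_inner_comm (φ (x i)) (fdag - p) ▸
      hq (φ (x i)) (Submodule.subset_span ⟨i, rfl⟩)
    rw [inner_sub_left] at hperp
    linarith
  have hrisk : (n : ℝ)⁻¹ * ∑ i, V (yv i) (e (A p) (x i))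
      = (n : ℝ)⁻¹ * ∑ i, V (yv i) (e (A fdag) (x i)) := by
    congr 1
    exact Finset.sum_congr rfl fun i _ => by rw [heval]
  have hpmin : ∀ f' : H1,
      (n : ℝ)⁻¹ * ∑ i, V (yv i) (e (A p) (x i))
        ≤ (n : ℝ)⁻¹ * ∑ i, V (yv i) (e (A f') (x i)) := by
    intro f'; rw [hrisk]; exact hfdag_min f'
  have hnorm : ‖fdag‖ ≤ ‖p‖ := hfdag_norm p hpmin
  -- Pythagoras forces `fdag = p ∈ T`
  have hpyth : ‖fdag - p‖ ^ 2 + ‖p‖ ^ 2 = ‖fdag‖ ^ 2 := by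
    have horth : ⟪fdag - p, p⟫ = 0 := real_inner_comm p (fdag - p) ▸ hq p hpT
    have h := norm_add_sq_real (fdag - p) p
    rw [horth] at h
    simpa [sub_add_cancel] using h.symm
  have hfp : fdag = p := by
    have h0 : ‖fdag - p‖ = 0 := by
      nlinarith [norm_nonneg (fdag - p), norm_nonneg p, norm_nonneg fdag]
    exact sub_eq_zero.mp (norm_eq_zero.mp h0)
  have hmem : fdag ∈ T := hfp ▸ hpT
  rw [hT, Submodule.mem_span_range_iff_exists_fun ℝ] at hmem
  obtain ⟨α, hα⟩ := hmem
  refine ⟨α, hα.symm, ?_⟩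
  rw [← hAf, ← hα, map_sum]
  simp [map_smul]
end

section
/- Suppose ε(λ) ∈ Θ(λ^γ) as λ → 0, with γ ≥ 0. If λ_n ∈ Θ(n^{-p}) with p > 0, then δ̃(n) := Δ(n, λ_n) ∈ Θ(n^{-max(1/2, 1 − pγ)}) as n → ∞. If λ_δ ∈ Θ(δ^{p*}) with p* > 0, then ñ(δ) := ⌊N(δ, λ_δ)⌋ ∈ Θ(δ^{-min(2, p*γ + 1)}) as δ → 0. -/
open Filter Topology Asymptotics

/-- `Δ(n,λ) = (σ²/n)/(√(σ²/n + ε(λ)²) + ε(λ))`. -/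
noncomputable def Delta (σ : ℝ) (ε : ℝ → ℝ) (n : ℕ) (l : ℝ) : ℝ :=
  (σ ^ 2 / n) / (Real.sqrt (σ ^ 2 / n + ε l ^ 2) + ε l)

/-- `N(δ,λ) = σ²/(δ² + 2δε(λ))`. -/
noncomputable def Nfun (σ : ℝ) (ε : ℝ → ℝ) (δ l : ℝ) : ℝ :=
  σ ^ 2 / (δ ^ 2 + 2 * δ * ε l)

lemma bounds_of_isTheta {α : Type*} {l : Filter α} {f g : α → ℝ}
    (h : f =Θ[l] g) (hf : ∀ᶠ x in l, 0 ≤ f x) (hg : ∀ᶠ x in l, 0 ≤ g x) :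
    ∃ c C : ℝ, 0 < c ∧ (∀ᶠ x in l, c * g x ≤ f x) ∧ (∀ᶠ x in l, f x ≤ C * g x) := by
  obtain ⟨C, hC⟩ := h.1.bound
  obtain ⟨c', hc'pos, hc⟩ := h.2.exists_pos
  refine ⟨c'⁻¹, C, by positivity, ?_, ?_⟩
  · filter_upwards [hc.bound, hf, hg] with x h1 h2 h3
    rw [Real.norm_of_nonneg h3, Real.norm_of_nonneg h2] at h1
    rw [inv_mul_le_iff₀ hc'pos]
    exact h1
  · filter_upwards [hC, hf, hg] with x h1 h2 h3
    rw [Real.norm_of_nonneg h2, Real.norm_of_nonneg h3] at h1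
    exact h1

lemma isTheta_of_bounds {α : Type*} {l : Filter α} {f g : α → ℝ} {c C : ℝ}
    (hc : 0 < c)
    (h1 : ∀ᶠ x in l, c * g x ≤ f x) (h2 : ∀ᶠ x in l, f x ≤ C * g x)
    (hg : ∀ᶠ x in l, 0 ≤ g x) : f =Θ[l] g := by
  constructor
  · rw [isBigO_iff]
    refine ⟨C, ?_⟩
    filter_upwards [h1, h2, hg] with x a b d
    have hf : 0 ≤ f x := le_trans (by positivity) a
    rw [Real.norm_of_nonneg hf, Real.norm_of_nonneg d]
    exact b
  · rw [isBigO_iff]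
    refine ⟨c⁻¹, ?_⟩
    filter_upwards [h1, h2, hg] with x a b d
    have hf : 0 ≤ f x := le_trans (by positivity) a
    rw [Real.norm_of_nonneg hf, Real.norm_of_nonneg d, ← inv_mul_le_iff₀ (by positivity), inv_inv]
    exact a


set_option maxHeartbeats 1000000 in
lemma part1
    (σ : ℝ) (hσ : 0 < σ)
    (ε : ℝ → ℝ) (hεnonneg : ∀ l : ℝ, 0 < l → 0 ≤ ε l)
    (γ : ℝ) (hγ : 0 ≤ γ)
    (hε : ε =Θ[𝓝[>] (0 : ℝ)] fun l => l ^ γ)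
    (lamn : ℕ → ℝ) (p : ℝ) (hp : 0 < p) (hpos : ∀ n, 0 < lamn n)
    (hlam : lamn =Θ[atTop] fun n : ℕ => (n : ℝ) ^ (-p)) :
    (fun n : ℕ => Delta σ ε n (lamn n))
      =Θ[atTop] fun n : ℕ => (n : ℝ) ^ (-(max (1 / 2) (1 - p * γ))) := by
  -- λ_n → 0⁺
  have hlam0 : Tendsto lamn atTop (𝓝[>] (0:ℝ)) := by
    rw [tendsto_nhdsWithin_iff]
    constructor
    · exact hlam.1.trans_tendsto
        ((tendsto_rpow_neg_atTop hp).comp tendsto_natCast_atTop_atTop)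
    · exact Eventually.of_forall fun n => hpos n
  -- ε ∘ λ  =Θ  λ ^ γ
  have hcomp : (fun n => ε (lamn n)) =Θ[atTop] fun n => lamn n ^ γ :=
    ⟨hε.1.comp_tendsto hlam0, hε.2.comp_tendsto hlam0⟩
  -- λ ^ γ =Θ n ^ (-(p*γ))
  obtain ⟨c1, C1, hc1, hl1, hl2⟩ := bounds_of_isTheta hlam
    (Eventually.of_forall fun n => (hpos n).le)
    (Eventually.of_forall fun n => Real.rpow_nonneg (Nat.cast_nonneg n) _)
  have hpow : (fun n : ℕ => lamn n ^ γ) =Θ[atTop] fun n : ℕ => (n : ℝ) ^ (-(p*γ)) := by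
    apply isTheta_of_bounds (c := c1 ^ γ) (C := C1 ^ γ)
      (Real.rpow_pos_of_pos hc1 γ)
    · filter_upwards [hl1, eventually_gt_atTop 0] with n h1 hn
      have hx : (0:ℝ) < (n:ℝ) := by exact_mod_cast hn
      have : (c1 * (n:ℝ) ^ (-p)) ^ γ ≤ lamn n ^ γ :=
        Real.rpow_le_rpow (by positivity) h1 hγ
      rwa [Real.mul_rpow hc1.le (Real.rpow_nonneg hx.le _), ← Real.rpow_mul hx.le,
        neg_mul] at this
    · filter_upwards [hl2, eventually_gt_atTop 0] with n h1 hn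
      have hx : (0:ℝ) < (n:ℝ) := by exact_mod_cast hn
      have : lamn n ^ γ ≤ (C1 * (n:ℝ) ^ (-p)) ^ γ :=
        Real.rpow_le_rpow (hpos n).le h1 hγ
      have hC1 : 0 ≤ C1 := by
        by_contra h
        have : C1 * (n:ℝ) ^ (-p) < 0 :=
          mul_neg_of_neg_of_pos (lt_of_not_ge h) (Real.rpow_pos_of_pos hx _)
        nlinarith [hpos n, Real.rpow_pos_of_pos hx (-p), hc1]
      rwa [Real.mul_rpow hC1 (Real.rpow_nonneg hx.le _), ← Real.rpow_mul hx.le,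
        neg_mul] at this
    · exact Eventually.of_forall fun n => Real.rpow_nonneg (Nat.cast_nonneg n) _
  have hE : (fun n => ε (lamn n)) =Θ[atTop] fun n : ℕ => (n:ℝ) ^ (-(p*γ)) :=
    hcomp.trans hpow
  obtain ⟨c2, C2, hc2, he1, he2⟩ := bounds_of_isTheta hE
    (Eventually.of_forall fun n => hεnonneg _ (hpos n))
    (Eventually.of_forall fun n => Real.rpow_nonneg (Nat.cast_nonneg n) _)
  set q : ℝ := min (1/2) (p*γ) with hqdef
  set mn : ℝ := min σ c2 with hmndef
  set M : ℝ := max σ C2 with hMdef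
  have hmn : 0 < mn := lt_min hσ hc2
  have hM : 0 < M := lt_of_lt_of_le hσ (le_max_left _ _)
  have hboth : ∀ᶠ n : ℕ in atTop,
      σ^2/(3*M) * (n:ℝ) ^ (-(max (1/2) (1 - p*γ))) ≤ Delta σ ε n (lamn n) ∧
      Delta σ ε n (lamn n) ≤ σ^2/mn * (n:ℝ) ^ (-(max (1/2) (1 - p*γ))) := by
    filter_upwards [he1, he2, eventually_ge_atTop 1] with n h1 h2 hn
    set x : ℝ := (n:ℝ) with hxdef
    have hx1 : (1:ℝ) ≤ x := by simp only [hxdef]; exact_mod_cast hn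
    have hx0 : (0:ℝ) < x := lt_of_lt_of_le one_pos hx1
    set e : ℝ := ε (lamn n) with hedef
    have he0 : 0 ≤ e := hεnonneg _ (hpos n)
    set b : ℝ := x ^ (-q) with hbdef
    have hb0 : 0 < b := Real.rpow_pos_of_pos hx0 _
    -- sqrt(σ²/x) = σ x^{-1/2}
    have hhalf : x ^ (-(1/2):ℝ) * x ^ (-(1/2):ℝ) = x⁻¹ := by
      rw [← Real.rpow_add hx0]
      norm_num [Real.rpow_neg_one]
    have hs2 : (σ * x ^ (-(1/2):ℝ))^2 = σ^2 / x := by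
      rw [mul_pow, pow_two (x ^ (-(1/2):ℝ)), hhalf, div_eq_mul_inv]
    have hss : Real.sqrt (σ^2 / x) = σ * x ^ (-(1/2):ℝ) := by
      rw [← hs2, Real.sqrt_sq (by positivity)]
    set D : ℝ := Real.sqrt (σ^2/x + e^2) + e with hDdef
    have hDlb_s : σ * x ^ (-(1/2):ℝ) ≤ D := by
      have h' : Real.sqrt (σ^2/x) ≤ Real.sqrt (σ^2/x + e^2) :=
        Real.sqrt_le_sqrt (by nlinarith)
      rw [hss] at h'
      have : (0:ℝ) ≤ e := he0
      simp only [hDdef]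
      linarith
    have hDlb_e : e ≤ D := by
      have := Real.sqrt_nonneg (σ^2/x + e^2)
      simp only [hDdef]; linarith
    have hDub : D ≤ σ * x ^ (-(1/2):ℝ) + 2*e := by
      have hsp : 0 ≤ σ * x ^ (-(1/2):ℝ) := by positivity
      have h' : Real.sqrt (σ^2/x + e^2) ≤ σ * x ^ (-(1/2):ℝ) + e := by
        rw [show σ * x ^ (-(1/2):ℝ) + e = Real.sqrt ((σ * x ^ (-(1/2):ℝ) + e)^2) from
          (Real.sqrt_sq (by positivity)).symm]
        exact Real.sqrt_le_sqrt (by nlinarith)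
      simp only [hDdef]; linarith
    have h12 : x ^ (-(1/2):ℝ) ≤ b :=
      Real.rpow_le_rpow_of_exponent_le hx1 (neg_le_neg (min_le_left _ _))
    have hpg : x ^ (-(p*γ)) ≤ b :=
      Real.rpow_le_rpow_of_exponent_le hx1 (neg_le_neg (min_le_right _ _))
    have hC2pos : 0 < C2 := by
      have hxp : (0:ℝ) < x ^ (-(p*γ)) := Real.rpow_pos_of_pos hx0 _
      nlinarith
    have e_le : e ≤ M * b := by
      calc e ≤ C2 * x ^ (-(p*γ)) := h2
        _ ≤ C2 * b := mul_le_mul_of_nonneg_left hpg hC2pos.le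
        _ ≤ M * b := mul_le_mul_of_nonneg_right (le_max_right _ _) hb0.le
    have s_le : σ * x ^ (-(1/2):ℝ) ≤ M * b := by
      calc σ * x ^ (-(1/2):ℝ) ≤ σ * b := mul_le_mul_of_nonneg_left h12 hσ.le
        _ ≤ M * b := mul_le_mul_of_nonneg_right (le_max_left _ _) hb0.le
    have hMub : D ≤ 3 * M * b := by
      calc D ≤ σ * x ^ (-(1/2):ℝ) + 2*e := hDub
        _ ≤ M*b + 2*(M*b) := by linarith
        _ = 3*M*b := by ring
    have hMlb : mn * b ≤ D := by
      rcases le_total (1/2:ℝ) (p*γ) with h | h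
      · have hq : q = 1/2 := min_eq_left h
        calc mn * b ≤ σ * b := mul_le_mul_of_nonneg_right (min_le_left _ _) hb0.le
          _ = σ * x ^ (-(1/2):ℝ) := by rw [hbdef, hq]
          _ ≤ D := hDlb_s
      · have hq : q = p*γ := min_eq_right h
        calc mn * b ≤ c2 * b := mul_le_mul_of_nonneg_right (min_le_right _ _) hb0.le
          _ = c2 * x ^ (-(p*γ)) := by rw [hbdef, hq]
          _ ≤ e := h1
          _ ≤ D := hDlb_e
    have hD0 : 0 < D := lt_of_lt_of_le (by positivity) hMlb
    have hkey : x ^ (-(max (1/2:ℝ) (1 - p*γ))) = 1 / (x * b) := by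
      have e1 : -(max (1/2:ℝ) (1-p*γ)) = q - 1 := by
        rcases le_total (1/2:ℝ) (p*γ) with h | h
        · rw [hqdef, min_eq_left h, max_eq_left (by linarith)]; norm_num
        · rw [hqdef, min_eq_right h, max_eq_right (by linarith)]; ring
      rw [e1, Real.rpow_sub hx0, Real.rpow_one, hbdef, Real.rpow_neg hx0.le]
      have hxq : (0:ℝ) < x ^ q := Real.rpow_pos_of_pos hx0 _
      field_simp
    have hDelta : Delta σ ε n (lamn n) = (σ^2/x) / D := by
      simp only [Delta, hDdef, hedef, hxdef]
    constructor
    · rw [hDelta, hkey]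
      have step : (σ^2/x) / (3*M*b) ≤ (σ^2/x) / D :=
        div_le_div_of_nonneg_left (by positivity) hD0 hMub
      have heq : σ^2/(3*M) * (1/(x*b)) = (σ^2/x) / (3*M*b) := by
        field_simp
      linarith [step, heq.le, heq.ge]
    · rw [hDelta, hkey]
      have step : (σ^2/x) / D ≤ (σ^2/x) / (mn*b) :=
        div_le_div_of_nonneg_left (by positivity) (by positivity) hMlb
      have heq : σ^2/mn * (1/(x*b)) = (σ^2/x) / (mn*b) := by
        field_simp
      linarith [step, heq.le, heq.ge]
  exact isTheta_of_bounds (by positivity) (hboth.mono fun n h => h.1)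
    (hboth.mono fun n h => h.2)
    (Eventually.of_forall fun n => Real.rpow_nonneg (Nat.cast_nonneg n) _)


set_option maxHeartbeats 1000000 in
lemma part2
    (σ : ℝ) (hσ : 0 < σ)
    (ε : ℝ → ℝ) (hεnonneg : ∀ l : ℝ, 0 < l → 0 ≤ ε l)
    (γ : ℝ) (hγ : 0 ≤ γ)
    (hε : ε =Θ[𝓝[>] (0 : ℝ)] fun l => l ^ γ)
    (lamd : ℝ → ℝ) (pstar : ℝ) (hps : 0 < pstar) (hpos : ∀ δ : ℝ, 0 < δ → 0 < lamd δ)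
    (hlam : lamd =Θ[𝓝[>] (0 : ℝ)] fun δ => δ ^ pstar) :
    (fun δ : ℝ => (⌊Nfun σ ε δ (lamd δ)⌋₊ : ℝ))
      =Θ[𝓝[>] (0 : ℝ)] fun δ => δ ^ (-(min 2 (pstar * γ + 1))) := by
  have hmem : ∀ᶠ δ : ℝ in 𝓝[>] 0, 0 < δ := eventually_mem_nhdsWithin
  -- λ_δ → 0⁺
  have hlam0 : Tendsto lamd (𝓝[>] (0:ℝ)) (𝓝[>] (0:ℝ)) := by
    rw [tendsto_nhdsWithin_iff]
    constructor
    · apply hlam.1.trans_tendsto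
      have hcont : ContinuousAt (fun δ : ℝ => δ ^ pstar) 0 :=
        Real.continuousAt_rpow_const 0 pstar (Or.inr hps.le)
      have := hcont.tendsto.mono_left (nhdsWithin_le_nhds (s := Set.Ioi (0:ℝ)))
      rwa [Real.zero_rpow hps.ne'] at this
    · filter_upwards [hmem] with δ hδ; exact hpos δ hδ
  have hcomp : (fun δ => ε (lamd δ)) =Θ[𝓝[>] (0:ℝ)] fun δ => lamd δ ^ γ :=
    ⟨hε.1.comp_tendsto hlam0, hε.2.comp_tendsto hlam0⟩
  obtain ⟨c1, C1, hc1, hl1, hl2⟩ := bounds_of_isTheta hlam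
    (hmem.mono fun δ hδ => (hpos δ hδ).le)
    (hmem.mono fun δ hδ => Real.rpow_nonneg hδ.le _)
  have hpow : (fun δ : ℝ => lamd δ ^ γ) =Θ[𝓝[>] (0:ℝ)] fun δ => δ ^ (pstar*γ) := by
    apply isTheta_of_bounds (c := c1 ^ γ) (C := C1 ^ γ)
      (Real.rpow_pos_of_pos hc1 γ)
    · filter_upwards [hl1, hmem] with δ h1 hδ
      have : (c1 * δ ^ pstar) ^ γ ≤ lamd δ ^ γ :=
        Real.rpow_le_rpow (by positivity) h1 hγ
      rwa [Real.mul_rpow hc1.le (Real.rpow_nonneg hδ.le _), ← Real.rpow_mul hδ.le] at this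
    · filter_upwards [hl1, hl2, hmem] with δ h1 h2 hδ
      have hC1 : 0 ≤ C1 := by
        have hxp : (0:ℝ) < δ ^ pstar := Real.rpow_pos_of_pos hδ _
        nlinarith [hpos δ hδ]
      have : lamd δ ^ γ ≤ (C1 * δ ^ pstar) ^ γ :=
        Real.rpow_le_rpow (hpos δ hδ).le h2 hγ
      rwa [Real.mul_rpow hC1 (Real.rpow_nonneg hδ.le _), ← Real.rpow_mul hδ.le] at this
    · filter_upwards [hmem] with δ hδ; exact Real.rpow_nonneg hδ.le _
  have hE : (fun δ => ε (lamd δ)) =Θ[𝓝[>] (0:ℝ)] fun δ => δ ^ (pstar*γ) :=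
    hcomp.trans hpow
  obtain ⟨c2, C2, hc2, he1, he2⟩ := bounds_of_isTheta hE
    (hmem.mono fun δ hδ => hεnonneg _ (hpos δ hδ))
    (hmem.mono fun δ hδ => Real.rpow_nonneg hδ.le _)
  -- C2 is globally positive
  have hC2 : 0 < C2 := by
    obtain ⟨δ, ⟨h1, h2⟩, hδ⟩ := ((he1.and he2).and hmem).exists
    have hxp : (0:ℝ) < δ ^ (pstar*γ) := Real.rpow_pos_of_pos hδ _
    nlinarith
  set m : ℝ := min 2 (pstar*γ+1) with hmdef
  have hpg0 : 0 ≤ pstar * γ := mul_nonneg hps.le hγ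
  have hm1 : 1 ≤ m := le_min one_le_two (by linarith)
  have hm0 : 0 < m := lt_of_lt_of_le one_pos hm1
  set kl : ℝ := min 1 (2*c2) with hkldef
  have hkl : 0 < kl := lt_min one_pos (by linarith)
  have h01 : ∀ᶠ δ : ℝ in 𝓝[>] 0, δ ∈ Set.Ioo (0:ℝ) 1 :=
    eventually_of_mem (Ioo_mem_nhdsGT_of_mem (by norm_num)) fun δ h => h
  -- the two-sided bound on Nfun
  have hNb : ∀ᶠ δ : ℝ in 𝓝[>] 0,
      σ^2/(1+2*C2) * δ ^ (-m) ≤ Nfun σ ε δ (lamd δ) ∧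
      Nfun σ ε δ (lamd δ) ≤ σ^2/kl * δ ^ (-m) := by
    filter_upwards [he1, he2, h01] with δ h1 h2 hδ01
    obtain ⟨hδ0, hδ1⟩ := hδ01
    set e : ℝ := ε (lamd δ) with hedef
    have he0 : 0 ≤ e := hεnonneg _ (hpos δ hδ0)
    have hδm : (0:ℝ) < δ ^ m := Real.rpow_pos_of_pos hδ0 _
    have hd2 : δ ^ (2:ℝ) = δ ^ 2 := by
      rw [show ((2:ℝ)) = ((2:ℕ):ℝ) by norm_num, Real.rpow_natCast]
    have hmul : δ * δ ^ (pstar*γ) = δ ^ (pstar*γ+1) := by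
      rw [Real.rpow_add hδ0, Real.rpow_one]; ring
    have hle2 : δ ^ m ≤ δ ^ (2:ℝ) ∨ True := Or.inr trivial
    have h2m : δ ^ (2:ℝ) ≤ δ ^ m :=
      Real.rpow_le_rpow_of_exponent_ge hδ0 hδ1.le (min_le_left _ _)
    have hpm : δ ^ (pstar*γ+1) ≤ δ ^ m :=
      Real.rpow_le_rpow_of_exponent_ge hδ0 hδ1.le (min_le_right _ _)
    have hδpg : (0:ℝ) < δ ^ (pstar*γ) := Real.rpow_pos_of_pos hδ0 _
    -- denominator bounds
    have hdenub : δ^2 + 2*δ*e ≤ (1+2*C2) * δ ^ m := by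
      have h2de : 2*δ*e ≤ 2*C2 * δ ^ (pstar*γ+1) := by
        have := mul_le_mul_of_nonneg_left h2 (by positivity : (0:ℝ) ≤ 2*δ)
        calc 2*δ*e ≤ 2*δ*(C2 * δ ^ (pstar*γ)) := this
          _ = 2*C2 * (δ * δ ^ (pstar*γ)) := by ring
          _ = 2*C2 * δ ^ (pstar*γ+1) := by rw [hmul]
      have h2C2 : 2*C2 * δ ^ (pstar*γ+1) ≤ 2*C2 * δ ^ m :=
        mul_le_mul_of_nonneg_left hpm (by linarith)
      have hq2 : δ^2 ≤ δ ^ m := by rw [← hd2]; exact h2m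
      calc δ^2 + 2*δ*e ≤ δ ^ m + 2*C2 * δ ^ m := add_le_add hq2 (h2de.trans h2C2)
        _ = (1+2*C2) * δ ^ m := by ring
    have hdenlb : kl * δ ^ m ≤ δ^2 + 2*δ*e := by
      have h2de : 2*c2 * δ ^ (pstar*γ+1) ≤ 2*δ*e := by
        have := mul_le_mul_of_nonneg_left h1 (by positivity : (0:ℝ) ≤ 2*δ)
        calc 2*c2 * δ ^ (pstar*γ+1) = 2*δ*(c2 * δ ^ (pstar*γ)) := by
              rw [← hmul]; ring
          _ ≤ 2*δ*e := this
      have hsq : (0:ℝ) ≤ δ^2 := sq_nonneg δ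
      have h2de0 : (0:ℝ) ≤ 2*δ*e := by positivity
      rcases le_total (2:ℝ) (pstar*γ+1) with h | h
      · have hq : m = 2 := min_eq_left h
        have : kl * δ ^ m ≤ 1 * δ ^ m :=
          mul_le_mul_of_nonneg_right (min_le_left _ _) hδm.le
        have h2' : δ ^ m = δ^2 := by rw [hq, hd2]
        nlinarith
      · have hq : m = pstar*γ+1 := min_eq_right h
        have hk2 : kl * δ ^ m ≤ 2*c2 * δ ^ m :=
          mul_le_mul_of_nonneg_right (min_le_right _ _) hδm.le
        rw [hq] at hk2
        have : δ ^ m = δ ^ (pstar*γ+1) := by rw [hq]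
        nlinarith
    have hden0 : (0:ℝ) < δ^2 + 2*δ*e := lt_of_lt_of_le (by positivity) hdenlb
    have hNdef : Nfun σ ε δ (lamd δ) = σ^2 / (δ^2 + 2*δ*e) := rfl
    have hinv : δ ^ (-m) = (δ ^ m)⁻¹ := by
      rw [Real.rpow_neg hδ0.le]
    constructor
    · rw [hNdef, hinv]
      have step : σ^2 / ((1+2*C2) * δ ^ m) ≤ σ^2 / (δ^2 + 2*δ*e) :=
        div_le_div_of_nonneg_left (by positivity) hden0 hdenub
      have heq : σ^2/(1+2*C2) * (δ ^ m)⁻¹ = σ^2 / ((1+2*C2) * δ ^ m) := by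
        field_simp
      linarith [heq.le, heq.ge]
    · rw [hNdef, hinv]
      have step : σ^2 / (δ^2 + 2*δ*e) ≤ σ^2 / (kl * δ ^ m) :=
        div_le_div_of_nonneg_left (by positivity) (by positivity) hdenlb
      have heq : σ^2/kl * (δ ^ m)⁻¹ = σ^2 / (kl * δ ^ m) := by
        field_simp
      linarith [heq.le, heq.ge]
  -- δ^(-m) → ∞
  have htends : Tendsto (fun δ : ℝ => δ ^ (-m)) (𝓝[>] (0:ℝ)) atTop := by
    have h1 : Tendsto (fun δ : ℝ => (δ⁻¹) ^ m) (𝓝[>] (0:ℝ)) atTop :=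
      (tendsto_rpow_atTop hm0).comp tendsto_inv_nhdsGT_zero
    apply h1.congr'
    filter_upwards [hmem] with δ hδ
    rw [Real.inv_rpow hδ.le, ← Real.rpow_neg hδ.le]
  have hbig : ∀ᶠ δ : ℝ in 𝓝[>] 0, 2 ≤ σ^2/(1+2*C2) * δ ^ (-m) :=
    (htends.const_mul_atTop (by positivity)).eventually_ge_atTop 2
  -- conclude
  apply isTheta_of_bounds (c := σ^2/(2*(1+2*C2))) (C := σ^2/kl) (by positivity)
  · filter_upwards [hNb, hbig] with δ hb h2
    obtain ⟨hl, hu⟩ := hb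
    set N : ℝ := Nfun σ ε δ (lamd δ) with hNdef
    have hN2 : 2 ≤ N := le_trans h2 hl
    have hfl : N - 1 < (⌊N⌋₊ : ℝ) := Nat.sub_one_lt_floor N
    have heq : σ^2/(2*(1+2*C2)) * δ ^ (-m) = (σ^2/(1+2*C2) * δ ^ (-m))/2 := by
      have : (1+2*C2) ≠ 0 := by positivity
      field_simp
      try exact Or.inl trivial
    rw [heq]
    linarith
  · filter_upwards [hNb, hbig] with δ hb h2
    obtain ⟨hl, hu⟩ := hb
    have hN0 : 0 ≤ Nfun σ ε δ (lamd δ) := le_trans (by linarith) hl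
    exact le_trans (Nat.floor_le hN0) hu
  · filter_upwards [hmem] with δ hδ; exact Real.rpow_nonneg hδ.le _


/-- **Rates of the noise level/sample size correspondence.**
Suppose `ε(λ) ∈ Θ(λ^γ)` as `λ → 0⁺`, with `γ ≥ 0`.  If `λ_n ∈ Θ(n^{-p})` with `p > 0`, then
`δ̃(n) = Δ(n, λ_n) ∈ Θ(n^{-max(1/2, 1 − pγ)})` as `n → ∞`.  If `λ_δ ∈ Θ(δ^{p*})` with
`p* > 0`, then `ñ(δ) = ⌊N(δ, λ_δ)⌋ ∈ Θ(δ^{-min(2, p*γ + 1)})` as `δ → 0⁺`. -/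
theorem stmt14
    (σ : ℝ) (hσ : 0 < σ)
    (ε : ℝ → ℝ) (hεnonneg : ∀ l : ℝ, 0 < l → 0 ≤ ε l)
    (γ : ℝ) (hγ : 0 ≤ γ)
    (hε : ε =Θ[𝓝[>] (0 : ℝ)] fun l => l ^ γ) :
    (∀ (lamn : ℕ → ℝ) (p : ℝ), 0 < p → (∀ n, 0 < lamn n) →
      (lamn =Θ[atTop] fun n : ℕ => (n : ℝ) ^ (-p)) →
      (fun n : ℕ => Delta σ ε n (lamn n))
        =Θ[atTop] fun n : ℕ => (n : ℝ) ^ (-(max (1 / 2) (1 - p * γ)))) ∧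
    (∀ (lamd : ℝ → ℝ) (pstar : ℝ), 0 < pstar → (∀ δ : ℝ, 0 < δ → 0 < lamd δ) →
      (lamd =Θ[𝓝[>] (0 : ℝ)] fun δ => δ ^ pstar) →
      (fun δ : ℝ => (⌊Nfun σ ε δ (lamd δ)⌋₊ : ℝ))
        =Θ[𝓝[>] (0 : ℝ)] fun δ => δ ^ (-(min 2 (pstar * γ + 1)))) := by
  exact ⟨fun lamn p hp hpos hlam => part1 σ hσ ε hεnonneg γ hγ hε lamn p hp hpos hlam,
    fun lamd pstar hps hpos hlam => part2 σ hσ ε hεnonneg γ hγ hε lamd pstar hps hpos hlam⟩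
end
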